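/- Let w ∈ ℝⁿ satisfy ⟨w, aᵛ − aᵛ'⟩ = 0 and ⟨w, bᵘ⟩ = 0 for all pairs (ν, μ), (ν', μ') in the index set η, where η is invariant under any permutation Q fixing both λ(X) and λ(Y) (i.e., for (ν, μ) ∈ η and such Q there is (ν', μ') ∈ η with aᵛ' = Q aᵛ and bᵘ' = Q bᵘ). Then for every block γ of coordinates on which both λ(X) and λ(Y) are constant, if there exist i, j ∈ γ and (ν, μ) ∈ η with (aᵛ)_i ≠ (aᵛ)_j or (bᵘ)_i ≠ (bᵘ)_j, then w is constant on γ: w_γ = ρ·1 for some ρ ∈ ℝ. -/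

import Mathlib

/- STATEMENT 17: if w is orthogonal to the differences aᵛ − aᵛ' and to the bᵘ
over an index set η that is invariant under permutations fixing λ(X) and λ(Y),
then w is constant on every block γ on which λ(X) and λ(Y) are constant,
provided some datum of η separates two indices of γ. -/

open Classical Matrix

noncomputable section

/-- Auxiliary: pairing with the difference of a vector and its swap. -/
lemma statement17_dot_swap {n : ℕ} (w v : Fin n → ℝ) (i j : Fin n) (hij : i ≠ j)
    (h : w ⬝ᵥ v - w ⬝ᵥ (v ∘ ⇑(Equiv.swap i j)) = 0) :
    (w i - w j) * (v i - v j) = 0 := by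
  have h2 : w ⬝ᵥ (v ∘ ⇑(Equiv.swap i j)) = ∑ k, w (Equiv.swap i j k) * v k := by
    rw [dotProduct, ← Equiv.sum_comp (Equiv.swap i j)
      (fun k => w (Equiv.swap i j k) * v k)]
    simp [Equiv.swap_apply_self, Function.comp]
  have h3 : ∑ k, (w k - w (Equiv.swap i j k)) * v k = 0 := by
    simp only [sub_mul, Finset.sum_sub_distrib]
    rw [h2] at h
    simpa [dotProduct] using h
  have h4 : ∑ k ∈ ({i, j} : Finset (Fin n)), (w k - w (Equiv.swap i j k)) * v k = 0 := by
    rw [← h3]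
    apply Finset.sum_subset (Finset.subset_univ _)
    intro k _ hk
    simp only [Finset.mem_insert, Finset.mem_singleton, not_or] at hk
    rw [Equiv.swap_apply_of_ne_of_ne hk.1 hk.2]
    ring
  rw [Finset.sum_pair hij] at h4
  rw [Equiv.swap_apply_left, Equiv.swap_apply_right] at h4
  linear_combination h4

theorem statement17 {n p q : ℕ}
    (lamX lamY : Fin n → ℝ)
    (a : Fin p → (Fin n → ℝ)) (b : Fin q → (Fin n → ℝ))
    (η : Set (Fin p × Fin q)) (w : Fin n → ℝ)
    (hinv : ∀ νμ ∈ η, ∀ σ : Equiv.Perm (Fin n),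
      lamX ∘ σ = lamX → lamY ∘ σ = lamY →
      ∃ νμ' ∈ η, a νμ'.1 = a νμ.1 ∘ σ ∧ b νμ'.2 = b νμ.2 ∘ σ)
    (hw : ∀ νμ ∈ η, ∀ νμ' ∈ η,
      w ⬝ᵥ (a νμ.1 - a νμ'.1) = 0 ∧ w ⬝ᵥ b νμ.2 = 0)
    (γ : Set (Fin n))
    (hγconst : ∀ i ∈ γ, ∀ j ∈ γ, lamX i = lamX j ∧ lamY i = lamY j)
    (hγmax : ∀ k : Fin n, (∀ i ∈ γ, lamX k = lamX i ∧ lamY k = lamY i) → k ∈ γ)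
    (hsep : ∃ i ∈ γ, ∃ j ∈ γ, ∃ νμ ∈ η, a νμ.1 i ≠ a νμ.1 j ∨ b νμ.2 i ≠ b νμ.2 j) :
    ∃ ρ : ℝ, ∀ i ∈ γ, w i = ρ := by
  classical
  -- Any permutation supported on γ fixes lamX and lamY.
  have hfix : ∀ σ : Equiv.Perm (Fin n),
      (∀ k, k ∉ γ → σ k = k) → (∀ k ∈ γ, σ k ∈ γ) →
      lamX ∘ σ = lamX ∧ lamY ∘ σ = lamY := by
    intro σ hout hin
    constructor <;> funext k <;> by_cases hk : k ∈ γ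
    · exact (hγconst _ (hin k hk) _ hk).1
    · simp [hout k hk]
    · exact (hγconst _ (hin k hk) _ hk).2
    · simp [hout k hk]
  have hswap : ∀ x ∈ γ, ∀ y ∈ γ,
      (∀ k, k ∉ γ → Equiv.swap x y k = k) ∧ (∀ k ∈ γ, Equiv.swap x y k ∈ γ) := by
    intro x hx y hy
    constructor
    · intro k hk
      apply Equiv.swap_apply_of_ne_of_ne
      · rintro rfl; exact hk hx
      · rintro rfl; exact hk hy
    · intro k hk
      rcases eq_or_ne k x with rfl | hkx
      · simpa [Equiv.swap_apply_left] using hy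
      rcases eq_or_ne k y with rfl | hky
      · simpa [Equiv.swap_apply_right] using hx
      · simpa [Equiv.swap_apply_of_ne_of_ne hkx hky] using hk
  -- Key step: if some datum of η separates i and j in γ, then w i = w j.
  have key : ∀ i ∈ γ, ∀ j ∈ γ, ∀ νμ ∈ η,
      (a νμ.1 i ≠ a νμ.1 j ∨ b νμ.2 i ≠ b νμ.2 j) → w i = w j := by
    intro i hi j hj νμ hνμ hsep'
    rcases eq_or_ne i j with rfl | hij
    · rfl
    set σ := Equiv.swap i j with hσ
    obtain ⟨h1, h2⟩ := hfix σ (hswap i hi j hj).1 (hswap i hi j hj).2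
    obtain ⟨νμ', hνμ', ha', hb'⟩ := hinv νμ hνμ σ h1 h2
    obtain ⟨hwa, hwb⟩ := hw νμ hνμ νμ' hνμ'
    obtain ⟨_, hwb'⟩ := hw νμ' hνμ' νμ hνμ
    rcases hsep' with hs | hs
    · -- use the a–datum
      have : (w i - w j) * (a νμ.1 i - a νμ.1 j) = 0 := by
        apply statement17_dot_swap w (a νμ.1) i j hij
        have := hwa
        rw [dotProduct_sub] at this
        rw [ha'] at this
        exact this
      rcases mul_eq_zero.1 this with h | h
      · linarith [sub_eq_zero.1 h]
      · exact absurd (sub_eq_zero.1 h) hs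
    · -- use the b–datum
      have : (w i - w j) * (b νμ.2 i - b νμ.2 j) = 0 := by
        apply statement17_dot_swap w (b νμ.2) i j hij
        rw [hb'] at hwb'
        rw [hwb, hwb']
        ring
      rcases mul_eq_zero.1 this with h | h
      · linarith [sub_eq_zero.1 h]
      · exact absurd (sub_eq_zero.1 h) hs
  -- Extract the separating datum.
  obtain ⟨i₀, hi₀, j₀, hj₀, νμ, hνμ, hs⟩ := hsep
  have hi₀j₀ : i₀ ≠ j₀ := by
    rintro rfl
    rcases hs with h | h <;> exact h rfl
  refine ⟨w i₀, fun i hi => ?_⟩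
  rcases eq_or_ne i i₀ with rfl | hii₀
  · rfl
  -- Build a permutation σ supported on γ with σ i = i₀ and σ i₀ = j₀.
  set σ₁ := Equiv.swap i i₀ with hσ₁
  have hj₁ : σ₁ i₀ = i := Equiv.swap_apply_right i i₀
  set σ₂ := Equiv.swap i j₀ with hσ₂
  set σ := σ₁.trans σ₂ with hσdef
  have hσi : σ i = i₀ := by
    simp only [hσdef, Equiv.trans_apply, hσ₁, Equiv.swap_apply_left]
    exact Equiv.swap_apply_of_ne_of_ne (Ne.symm hii₀) hi₀j₀
  have hσi₀ : σ i₀ = j₀ := by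
    simp only [hσdef, Equiv.trans_apply, hσ₁, Equiv.swap_apply_right, hσ₂,
      Equiv.swap_apply_left]
  have hout : ∀ k, k ∉ γ → σ k = k := by
    intro k hk
    simp only [hσdef, Equiv.trans_apply, hσ₁, hσ₂,
      (hswap i hi i₀ hi₀).1 k hk, (hswap i hi j₀ hj₀).1 k hk]
  have hin : ∀ k ∈ γ, σ k ∈ γ := by
    intro k hk
    exact (hswap i hi j₀ hj₀).2 _ ((hswap i hi i₀ hi₀).2 k hk)
  obtain ⟨h1, h2⟩ := hfix σ hout hin
  obtain ⟨νμ', hνμ', ha', hb'⟩ := hinv νμ hνμ σ h1 h2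
  have hsep' : a νμ'.1 i ≠ a νμ'.1 i₀ ∨ b νμ'.2 i ≠ b νμ'.2 i₀ := by
    rw [ha', hb']
    simpa [Function.comp, hσi, hσi₀] using hs
  exact key i hi i₀ hi₀ νμ' hνμ' hsep'

end
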